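/- arXiv:1703.06942 — 4 statements merged into one kernel-verified Lean document; each statement's English description precedes it below -/
import Mathlib

section
/- The matrix polynomials P_n satisfy the first-order differentiation formula (1-x²) P_n'(x) = -n x P_n(x) - (n(α-β)/(α+β+2n)) T P_n(x) + γ_{n-1} P_{n-1}(x), where γ_{n-1} = 2(n+α)(n+β)/(α+β+2n) and T = [[0,1],[1,0]]. -/
open Matrix Real Finset

noncomputable section

attribute [local instance] Matrix.normedAddCommGroup Matrix.normedSpace

/-- The scalar Jacobi weight `w_{α,β}(x) = (1-x)^α (1+x)^β`. -/
def jacobiW (α β x : ℝ) : ℝ := (1 - x) ^ α * (1 + x) ^ β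

/-- The 2×2 Jacobi-type matrix weight `W_{(α,β)}`. -/
def Wmat (α β x : ℝ) : Matrix (Fin 2) (Fin 2) ℝ :=
  (1 / 2 : ℝ) •
    !![jacobiW α β x + jacobiW β α x, -jacobiW α β x + jacobiW β α x;
       -jacobiW α β x + jacobiW β α x, jacobiW α β x + jacobiW β α x]

/-- The permutation matrix `T`. -/
def Tmat : Matrix (Fin 2) (Fin 2) ℝ := !![0, 1; 1, 0]

/-- The classical Jacobi polynomial
`p_n^{(α,β)}(x) = ((α+1)_n / n!) ₂F₁(-n, n+α+β+1; α+1; (1-x)/2)` (a terminating sum). -/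
def jacobiP (α β : ℝ) (n : ℕ) (x : ℝ) : ℝ :=
  (ascPochhammer ℝ n).eval (α + 1) / (n.factorial : ℝ) *
    ∑ k ∈ Finset.range (n + 1),
      ((ascPochhammer ℝ k).eval (-(n : ℝ)) * (ascPochhammer ℝ k).eval ((n : ℝ) + α + β + 1)) /
        ((ascPochhammer ℝ k).eval (α + 1) * (k.factorial : ℝ)) * ((1 - x) / 2) ^ k

/-- The 2×2 matrix Jacobi-type orthogonal polynomial `P_n^{(α,β)}`. -/
def Pmat (α β : ℝ) (n : ℕ) (x : ℝ) : Matrix (Fin 2) (Fin 2) ℝ :=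
  (1 / 2 : ℝ) •
    !![jacobiP α β n x + jacobiP β α n x, -jacobiP α β n x + jacobiP β α n x;
       -jacobiP α β n x + jacobiP β α n x, jacobiP α β n x + jacobiP β α n x]

/-- The squared-norm constant `h_n`. -/
def hJ (α β : ℝ) (n : ℕ) : ℝ :=
  2 ^ (α + β + 1) * Real.Gamma (α + n + 1) * Real.Gamma (β + n + 1) /
    ((α + β + 2 * n + 1) * (n.factorial : ℝ) * Real.Gamma (α + β + n + 1))

namespace JacobiAux

def pe (k : ℕ) (y : ℝ) : ℝ := (ascPochhammer ℝ k).eval y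

lemma pe_succ (k : ℕ) (y : ℝ) : pe (k + 1) y = pe k y * (y + k) :=
  ascPochhammer_succ_eval k y

lemma pe_succ_left (k : ℕ) (y : ℝ) : pe (k + 1) y = y * pe k (y + 1) := by
  simp [pe, ascPochhammer_succ_left, Polynomial.eval_comp]

lemma pe_pos {y : ℝ} (hy : 0 < y) (k : ℕ) : 0 < pe k y :=
  ascPochhammer_pos k y hy

def jc (α β : ℝ) (n k : ℕ) : ℝ :=
  pe k (-(n : ℝ)) * pe k ((n : ℝ) + α + β + 1) / (pe k (α + 1) * (k.factorial : ℝ))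

lemma jc_zero (α β : ℝ) (n : ℕ) : jc α β n 0 = 1 := by
  simp [jc, pe]

lemma jacobiP_eq (α β : ℝ) (n : ℕ) (x : ℝ) :
    jacobiP α β n x =
      pe n (α + 1) / (n.factorial : ℝ) *
        ∑ k ∈ Finset.range (n + 1), jc α β n k * ((1 - x) / 2) ^ k := rfl

set_option maxHeartbeats 1600000 in
lemma Krec (α β : ℝ) (hα : -1 < α) (hβ : -1 < β) (m k : ℕ) :
    (pe (m+1) (α+1) / ((m+1).factorial : ℝ)) *
        ((((m:ℝ)+1)*(α-β)/(α+β+2*((m:ℝ)+1)) - ((m:ℝ)+1)) + 2*((k:ℝ)+1)) * jc α β (m+1) (k+1)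
      + (2*(((m:ℝ)+1)+α)*(((m:ℝ)+1)+β)/(α+β+2*((m:ℝ)+1))) *
          (pe m (α+1) / (m.factorial : ℝ)) * jc α β m (k+1)
    = 2 * (pe (m+1) (α+1) / ((m+1).factorial : ℝ)) * jc α β (m+1) k * ((k:ℝ) - ((m:ℝ)+1)) := by
  have h3 : (-((m:ℝ)+1)) * pe k (-((m:ℝ)+1)+1) = pe k (-((m:ℝ)+1)) * (-((m:ℝ)+1)+↑k) := by
    rw [← pe_succ_left, pe_succ]
  have hm2 : ((m:ℝ)+1) ≠ 0 := by positivity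
  have h2 : pe (k+1) (-(↑m:ℝ)) =
      pe k (-((m:ℝ)+1)) * (-((m:ℝ)+1)+↑k) * ((↑m:ℝ)-↑k) / ((m:ℝ)+1) := by
    have e : (-(↑m:ℝ)) = -((m:ℝ)+1)+1 := by ring
    rw [pe_succ, e, eq_div_iff hm2]
    linear_combination ((m:ℝ)-↑k) * h3
  have h4 : pe (k+1) ((↑m:ℝ)+α+β+1) = ((↑m:ℝ)+α+β+1) * pe k ((↑m:ℝ)+1+α+β+1) := by
    have e : ((↑m:ℝ)+α+β+1)+1 = (↑m:ℝ)+1+α+β+1 := by ring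
    rw [pe_succ_left, e]
  unfold jc
  push_cast [Nat.factorial_succ]
  rw [h2, h4, pe_succ m (α+1), pe_succ k (-((m:ℝ)+1)), pe_succ k ((m:ℝ)+1+α+β+1),
    pe_succ k (α+1)]
  clear h2 h3 h4
  generalize pe k (-((m:ℝ)+1)) = u
  generalize pe k ((m:ℝ)+1+α+β+1) = v
  generalize hw0 : pe k (α+1) = w
  generalize hP0 : pe m (α+1) = P
  have hw : w ≠ 0 := hw0 ▸ (pe_pos (by linarith) k).ne'
  have hP : P ≠ 0 := hP0 ▸ (pe_pos (by linarith) m).ne'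
  have hFk : ((k.factorial : ℝ)) ≠ 0 := by positivity
  have hFm : ((m.factorial : ℝ)) ≠ 0 := by positivity
  have hs : α+β+2*((m:ℝ)+1) ≠ 0 := by
    have : (0:ℝ) ≤ (m:ℝ) := Nat.cast_nonneg m
    intro h; nlinarith
  have hak : α+1+(k:ℝ) ≠ 0 := by
    have : (0:ℝ) ≤ (k:ℝ) := Nat.cast_nonneg k
    intro h; nlinarith
  have hk1 : ((k:ℝ)+1) ≠ 0 := by positivity
  have hs' : α+β+((m:ℝ)+1)*2 ≠ 0 := by rwa [mul_comm] at hs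
  field_simp
  ring

lemma K0 (α β : ℝ) (hα : -1 < α) (hβ : -1 < β) (m : ℕ) :
    (pe (m+1) (α+1) / ((m+1).factorial : ℝ)) * (((m:ℝ)+1)*(α-β)/(α+β+2*((m:ℝ)+1)) - ((m:ℝ)+1))
      + (2*(((m:ℝ)+1)+α)*(((m:ℝ)+1)+β)/(α+β+2*((m:ℝ)+1))) *
          (pe m (α+1) / (m.factorial : ℝ)) = 0 := by
  rw [pe_succ m (α+1)]
  push_cast [Nat.factorial_succ]
  have hP : pe m (α+1) ≠ 0 := (pe_pos (by linarith) m).ne'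
  have hFm : ((m.factorial : ℝ)) ≠ 0 := by positivity
  have hs : α+β+2*((m:ℝ)+1) ≠ 0 := by
    have : (0:ℝ) ≤ (m:ℝ) := Nat.cast_nonneg m
    intro h; nlinarith
  have hm2 : ((m:ℝ)+1) ≠ 0 := by positivity
  have hs' : α+β+((m:ℝ)+1)*2 ≠ 0 := by rwa [mul_comm] at hs
  field_simp
  ring

lemma sum_shift (F G : ℕ → ℝ) (t : ℝ) (n : ℕ) (h0 : G 0 = 0)
    (hrec : ∀ k, G (k + 1) = F k) (hlast : F n = 0) :
    ∑ k ∈ Finset.range (n + 1), F k * t ^ (k + 1)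
      = ∑ k ∈ Finset.range (n + 1), G k * t ^ k := by
  calc ∑ k ∈ Finset.range (n + 1), F k * t ^ (k + 1)
      = ∑ k ∈ Finset.range (n + 1), G (k + 1) * t ^ (k + 1) :=
        Finset.sum_congr rfl fun k _ => by rw [hrec]
    _ = ∑ k ∈ Finset.range (n + 2), G k * t ^ k := by
        rw [Finset.sum_range_succ' (fun k => G k * t ^ k) (n + 1), h0]
        simp
    _ = ∑ k ∈ Finset.range (n + 1), G k * t ^ k := by
        rw [Finset.sum_range_succ, hrec, hlast]
        simp

lemma jacobiP_hasDerivAt (α β : ℝ) (n : ℕ) (x : ℝ) :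
    HasDerivAt (jacobiP α β n)
      (pe n (α + 1) / (n.factorial : ℝ) *
        ∑ k ∈ Finset.range (n + 1),
          jc α β n k * ((k : ℝ) * ((1 - x) / 2) ^ (k - 1) * ((-1) / 2))) x := by
  have hfun : jacobiP α β n = fun y : ℝ =>
      pe n (α + 1) / (n.factorial : ℝ) *
        ∑ k ∈ Finset.range (n + 1), jc α β n k * ((1 - y) / 2) ^ k :=
    funext fun y => jacobiP_eq α β n y
  have ht : HasDerivAt (fun y : ℝ => (1 - y) / 2) ((-1) / 2) x :=
    ((hasDerivAt_id x).const_sub 1).div_const 2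
  have hsum : HasDerivAt
      (fun y : ℝ => ∑ k ∈ Finset.range (n + 1), jc α β n k * ((1 - y) / 2) ^ k)
      (∑ k ∈ Finset.range (n + 1),
        jc α β n k * ((k : ℝ) * ((1 - x) / 2) ^ (k - 1) * ((-1) / 2))) x :=
    HasDerivAt.fun_sum fun k _ => (ht.pow k).const_mul _
  rw [hfun]
  exact hsum.const_mul _

set_option maxHeartbeats 1600000 in
lemma scalar_lowering (α β : ℝ) (hα : -1 < α) (hβ : -1 < β) (m : ℕ) (x : ℝ) :
    (1 - x ^ 2) * deriv (jacobiP α β (m + 1)) x =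
      (((m:ℝ)+1)*(α-β)/(α+β+2*((m:ℝ)+1)) - ((m:ℝ)+1)*x) * jacobiP α β (m + 1) x +
        2*(((m:ℝ)+1)+α)*(((m:ℝ)+1)+β)/(α+β+2*((m:ℝ)+1)) * jacobiP α β m x := by
  have hd : jc α β m (m + 1) = 0 := by
    unfold jc
    rw [pe_succ]
    simp
  rw [(jacobiP_hasDerivAt α β (m + 1) x).deriv, jacobiP_eq α β (m + 1) x, jacobiP_eq α β m x]
  set t : ℝ := (1 - x) / 2 with ht0
  have hext : ∑ k ∈ Finset.range (m + 2), jc α β m k * t ^ k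
      = ∑ k ∈ Finset.range (m + 1), jc α β m k * t ^ k := by
    rw [Finset.sum_range_succ, hd]
    simp
  rw [← hext]
  set A : ℝ := pe (m + 1) (α + 1) / ((m + 1).factorial : ℝ) with hA
  set B : ℝ := pe m (α + 1) / (m.factorial : ℝ) with hB
  have key : ∑ k ∈ Finset.range (m + 2),
        (2 * A * jc α β (m + 1) k * ((k : ℝ) - ((m:ℝ)+1))) * t ^ (k + 1)
      = ∑ k ∈ Finset.range (m + 2),
        (A * ((((m:ℝ)+1)*(α-β)/(α+β+2*((m:ℝ)+1)) - ((m:ℝ)+1)) + 2*(k:ℝ)) * jc α β (m + 1) k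
          + (2*(((m:ℝ)+1)+α)*(((m:ℝ)+1)+β)/(α+β+2*((m:ℝ)+1))) * B * jc α β m k) * t ^ k := by
    refine sum_shift _ _ t (m + 1) ?_ ?_ ?_
    · have h := K0 α β hα hβ m
      simp only [jc_zero, Nat.cast_zero]
      rw [hA, hB]
      linear_combination h
    · intro k
      have h := Krec α β hα hβ m k
      rw [hA, hB]
      push_cast
      linear_combination h
    · push_cast
      ring
  have hxx : x = 1 - 2 * t := by rw [ht0]; ring
  have lhs_eq : (1 - x ^ 2) *
        (A * ∑ k ∈ Finset.range (m + 2),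
          jc α β (m + 1) k * ((k : ℝ) * t ^ (k - 1) * ((-1) / 2)))
      - (((((m:ℝ)+1)*(α-β)/(α+β+2*((m:ℝ)+1)) - ((m:ℝ)+1)*x)) *
            (A * ∑ k ∈ Finset.range (m + 2), jc α β (m + 1) k * t ^ k)
          + 2*(((m:ℝ)+1)+α)*(((m:ℝ)+1)+β)/(α+β+2*((m:ℝ)+1)) *
            (B * ∑ k ∈ Finset.range (m + 2), jc α β m k * t ^ k))
      = (∑ k ∈ Finset.range (m + 2),
          (2 * A * jc α β (m + 1) k * ((k : ℝ) - ((m:ℝ)+1))) * t ^ (k + 1))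
        - ∑ k ∈ Finset.range (m + 2),
          (A * ((((m:ℝ)+1)*(α-β)/(α+β+2*((m:ℝ)+1)) - ((m:ℝ)+1)) + 2*(k:ℝ)) * jc α β (m + 1) k
            + (2*(((m:ℝ)+1)+α)*(((m:ℝ)+1)+β)/(α+β+2*((m:ℝ)+1))) * B * jc α β m k) * t ^ k := by
    simp only [Finset.mul_sum, ← Finset.sum_add_distrib, ← Finset.sum_sub_distrib]
    refine Finset.sum_congr rfl fun k _ => ?_
    cases k with
    | zero =>
        rw [hxx]
        push_cast
        ring
    | succ j =>
        simp only [Nat.add_sub_cancel]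
        rw [hxx]
        push_cast
        ring
  rw [key] at lhs_eq
  simp only [sub_self] at lhs_eq
  linarith [lhs_eq]

def M1 : Matrix (Fin 2) (Fin 2) ℝ := (1 / 2 : ℝ) • !![1, -1; -1, 1]
def M2 : Matrix (Fin 2) (Fin 2) ℝ := (1 / 2 : ℝ) • !![1, 1; 1, 1]

lemma Pmat_repr (α β : ℝ) (n : ℕ) :
    Pmat α β n = fun y => jacobiP α β n y • M1 + jacobiP β α n y • M2 := by
  funext y
  ext i j
  fin_cases i <;> fin_cases j <;>
    simp [Pmat, M1, M2, Matrix.smul_apply, Matrix.add_apply] <;> ring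

lemma Pmat_hasDerivAt (α β : ℝ) (n : ℕ) (x : ℝ) :
    HasDerivAt (Pmat α β n)
      (deriv (jacobiP α β n) x • M1 + deriv (jacobiP β α n) x • M2) x := by
  rw [Pmat_repr]
  exact (((jacobiP_hasDerivAt α β n x).differentiableAt.hasDerivAt).smul_const M1).add
    (((jacobiP_hasDerivAt β α n x).differentiableAt.hasDerivAt).smul_const M2)


end JacobiAux

open JacobiAux in
/-- the first-order differentiation (lowering) formula
`(1-x²) P_n'(x) = -n x P_n(x) - (n(α-β)/(α+β+2n)) T P_n(x) + γ_{n-1} P_{n-1}(x)`,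
with `γ_{n-1} = 2(n+α)(n+β)/(α+β+2n)`. -/
theorem Pmat_lowering (α β : ℝ) (hα : -1 < α) (hβ : -1 < β)
    (n : ℕ) (hn : 1 ≤ n) (x : ℝ) :
    (1 - x ^ 2) • deriv (Pmat α β n) x =
      (-(n * x)) • Pmat α β n x - (n * (α - β) / (α + β + 2 * n)) • (Tmat * Pmat α β n x) +
        (2 * (n + α) * (n + β) / (α + β + 2 * n)) • Pmat α β (n - 1) x := by
  obtain ⟨m, rfl⟩ : ∃ m, n = m + 1 := ⟨n - 1, (Nat.succ_pred_eq_of_pos hn).symm⟩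
  simp only [Nat.add_sub_cancel]
  rw [show deriv (Pmat α β (m + 1)) x = _ from (Pmat_hasDerivAt α β (m + 1) x).deriv]
  have S1 := scalar_lowering α β hα hβ m x
  have S2 := scalar_lowering β α hβ hα m x
  ext i j
  fin_cases i <;> fin_cases j <;>
    · simp [Pmat, M1, M2, Tmat, Matrix.mul_apply, Fin.sum_univ_two, Matrix.smul_apply,
        Matrix.add_apply, Matrix.sub_apply]
      push_cast
      first
        | linear_combination (1/2 : ℝ) * S1 + (1/2 : ℝ) * S2
        | linear_combination (-(1/2) : ℝ) * S1 + (1/2 : ℝ) * S2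
end
end

section
/- For each n ≥ 0, the matrix polynomial P_n is an eigenfunction of the second-order matrix differential operator D defined by (fD)(x) = ((1-x²) f(x))'' + (f(x)(-x(α+β+2) Id + (α-β)T))', with scalar eigenvalue Λ_n = -n(n+α+β+1); equivalently, P_n''(x)(1-x²) + P_n'(x)(-x(α+β+2) Id + (α-β)T) = -n(n+α+β+1) P_n(x). -/
open Matrix Real Finset Polynomial

noncomputable section

attribute [local instance] Matrix.normedAddCommGroup Matrix.normedSpace

def jacCoef (α β : ℝ) (n k : ℕ) : ℝ :=
  ((ascPochhammer ℝ k).eval (-(n : ℝ)) * (ascPochhammer ℝ k).eval ((n : ℝ) + α + β + 1)) /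
    ((ascPochhammer ℝ k).eval (α + 1) * (k.factorial : ℝ))

def jacQ (α β : ℝ) (n : ℕ) : Polynomial ℝ :=
  ∑ k ∈ Finset.range (n + 1), Polynomial.C (jacCoef α β n k) * Polynomial.X ^ k

lemma jacQ_coeff (α β : ℝ) (n m : ℕ) :
    (jacQ α β n).coeff m = if m ≤ n then jacCoef α β n m else 0 := by
  simp only [jacQ, Polynomial.finset_sum_coeff, Polynomial.coeff_C_mul, Polynomial.coeff_X_pow,
    mul_ite, mul_one, mul_zero]
  rw [Finset.sum_ite_eq (Finset.range (n+1)) m (fun k => jacCoef α β n k)]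
  simp [Nat.lt_succ_iff]

lemma jacQ_rec (α β : ℝ) (hα : -1 < α) (n : ℕ) (k : ℕ) :
    ((k : ℝ) + 1) * ((k : ℝ) + (α + 1)) * (jacQ α β n).coeff (k + 1)
      = ((k : ℝ) + (-(n : ℝ))) * ((k : ℝ) + ((n : ℝ) + α + β + 1)) * (jacQ α β n).coeff k := by
  have hc : (0:ℝ) < α + 1 := by linarith
  rw [jacQ_coeff, jacQ_coeff]
  rcases lt_trichotomy k n with h | h | h
  · rw [if_pos (by omega), if_pos (by omega)]
    simp only [jacCoef]
    have e1 : (ascPochhammer ℝ (k+1)).eval (-(n:ℝ))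
        = (ascPochhammer ℝ k).eval (-(n:ℝ)) * (-(n:ℝ) + k) := by
      rw [ascPochhammer_succ_right]; simp
    have e2 : (ascPochhammer ℝ (k+1)).eval ((n:ℝ) + α + β + 1)
        = (ascPochhammer ℝ k).eval ((n:ℝ) + α + β + 1) * ((n:ℝ) + α + β + 1 + k) := by
      rw [ascPochhammer_succ_right]; simp
    have e3 : (ascPochhammer ℝ (k+1)).eval (α + 1)
        = (ascPochhammer ℝ k).eval (α + 1) * (α + 1 + k) := by
      rw [ascPochhammer_succ_right]; simp
    have e4 : ((k+1).factorial : ℝ) = ((k:ℝ) + 1) * (k.factorial : ℝ) := by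
      rw [Nat.factorial_succ]; push_cast; ring
    have hne : (ascPochhammer ℝ k).eval (α + 1) ≠ 0 :=
      ne_of_gt (ascPochhammer_pos k _ hc)
    have hck : α + 1 + (k:ℝ) ≠ 0 := by positivity
    have hfk : (k.factorial : ℝ) ≠ 0 := by positivity
    have hk1 : ((k:ℝ) + 1) ≠ 0 := by positivity
    rw [e1, e2, e3, e4]
    field_simp
    ring
  · subst h
    rw [if_neg (by omega), if_pos le_rfl]
    have : (k:ℝ) + (-(k:ℝ)) = 0 := by ring
    rw [this]
    ring
  · rw [if_neg (by omega), if_neg (by omega)]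
    ring

lemma coeff_X_mul_zero' (p : Polynomial ℝ) : (X * p).coeff 0 = 0 := by
  rw [commute_X p |>.eq, Polynomial.coeff_mul_X_zero]

lemma jacQ_ode_poly (α β : ℝ) (hα : -1 < α) (n : ℕ) :
    X * derivative (derivative (jacQ α β n))
      - X * (X * derivative (derivative (jacQ α β n)))
      + C (α + 1) * derivative (jacQ α β n)
      - C (α + β + 2) * (X * derivative (jacQ α β n))
      - C ((-(n:ℝ)) * ((n:ℝ) + α + β + 1)) * jacQ α β n = 0 := by
  set Q := jacQ α β n with hQ
  ext k
  rcases k with _ | _ | m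
  · have h := jacQ_rec α β hα n 0
    simp only [coeff_add, coeff_sub, coeff_C_mul, coeff_X_mul_zero', coeff_derivative,
      coeff_zero, zero_mul, Nat.cast_zero] at *
    push_cast at h ⊢
    linear_combination h
  · have h := jacQ_rec α β hα n 1
    simp only [coeff_add, coeff_sub, coeff_C_mul, coeff_X_mul, coeff_X_mul_zero', coeff_derivative, coeff_zero,
      Nat.cast_zero, Nat.cast_one] at *
    push_cast at h ⊢
    linear_combination h
  · have h := jacQ_rec α β hα n (m + 2)
    simp only [coeff_add, coeff_sub, coeff_C_mul, coeff_X_mul, coeff_X_mul_zero', coeff_derivative, coeff_zero,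
      Nat.cast_add, Nat.cast_one, Nat.cast_ofNat] at *
    push_cast at h ⊢
    linear_combination h

lemma jacobiP_eq_eval (α β : ℝ) (n : ℕ) (x : ℝ) :
    jacobiP α β n x
      = (ascPochhammer ℝ n).eval (α + 1) / (n.factorial : ℝ)
          * (jacQ α β n).eval ((1 - x) / 2) := by
  simp only [jacobiP, jacQ, Polynomial.eval_finset_sum, Polynomial.eval_mul, Polynomial.eval_pow,
    Polynomial.eval_C, Polynomial.eval_X, jacCoef]

lemma hasDerivAt_evalComp (P : Polynomial ℝ) (x : ℝ) :
    HasDerivAt (fun y => P.eval ((1 - y) / 2))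
      (P.derivative.eval ((1 - x) / 2) * (-(1/2))) x := by
  have hu : HasDerivAt (fun y : ℝ => (1 - y) / 2) (-(1/2)) x := by
    have h := ((hasDerivAt_id' x).const_sub 1).div_const 2
    rw [show (-(1/2):ℝ) = -1/2 by norm_num]
    exact h
  exact (P.hasDerivAt ((1 - x) / 2)).comp x hu

lemma jacobi_ode (α β : ℝ) (hα : -1 < α) (n : ℕ) :
    ∃ p1 p2 : ℝ → ℝ,
      (∀ x, HasDerivAt (jacobiP α β n) (p1 x) x) ∧
      (∀ x, HasDerivAt p1 (p2 x) x) ∧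
      (∀ x, (1 - x ^ 2) * p2 x + (β - α - (α + β + 2) * x) * p1 x
        = (-((n : ℝ) * ((n : ℝ) + α + β + 1))) * jacobiP α β n x) := by
  set K := (ascPochhammer ℝ n).eval (α + 1) / (n.factorial : ℝ) with hK
  set Q := jacQ α β n with hQdef
  refine ⟨fun x => K * (Q.derivative.eval ((1 - x) / 2) * (-(1/2))),
    fun x => K * (Q.derivative.derivative.eval ((1 - x) / 2) * (-(1/2)) * (-(1/2))), ?_, ?_, ?_⟩
  · intro x
    have h := ((hasDerivAt_evalComp Q x).const_mul K)
    have hfun : jacobiP α β n = fun y => K * Q.eval ((1 - y) / 2) :=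
      funext fun y => jacobiP_eq_eval α β n y
    rw [hfun]
    simpa [mul_assoc] using h
  · intro x
    have h := (((hasDerivAt_evalComp Q.derivative x).mul_const (-(1/2))).const_mul K)
    simpa [mul_assoc, mul_comm, mul_left_comm] using h
  · intro x
    have hpoly := jacQ_ode_poly α β hα n
    have hev := congrArg (Polynomial.eval ((1 - x) / 2)) hpoly
    simp only [Polynomial.eval_add, Polynomial.eval_sub, Polynomial.eval_mul, Polynomial.eval_C,
      Polynomial.eval_X, Polynomial.eval_zero] at hev
    rw [jacobiP_eq_eval]
    rw [← hQdef, ← hK]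
    linear_combination K * hev

/-- `P_n` is an eigenfunction of the second-order differential operator `D`,
`P_n''(x)(1-x²) + P_n'(x)(-x(α+β+2) Id + (α-β)T) = -n(n+α+β+1) P_n(x)`. -/
theorem Pmat_eigenfunction (α β : ℝ) (hα : -1 < α) (hβ : -1 < β) (n : ℕ) (x : ℝ) :
    (1 - x ^ 2) • deriv (deriv (Pmat α β n)) x +
        deriv (Pmat α β n) x *
          ((-(x * (α + β + 2))) • (1 : Matrix (Fin 2) (Fin 2) ℝ) + (α - β) • Tmat) =
      (-(n * (n + α + β + 1))) • Pmat α β n x := by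
  obtain ⟨p1, p2, hp1, hp2, hpode⟩ := jacobi_ode α β hα n
  obtain ⟨q1, q2, hq1, hq2, hqode⟩ := jacobi_ode β α hβ n
  set A : Matrix (Fin 2) (Fin 2) ℝ := !![(1:ℝ)/2, -(1/2); -(1/2), 1/2] with hA
  set B : Matrix (Fin 2) (Fin 2) ℝ := !![(1:ℝ)/2, 1/2; 1/2, 1/2] with hB
  have hfun : Pmat α β n = fun y => jacobiP α β n y • A + jacobiP β α n y • B := by
    funext y
    ext i j
    fin_cases i <;> fin_cases j <;>
      simp [Pmat, hA, hB, Matrix.smul_apply] <;> ring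
  have hd1 : ∀ y, HasDerivAt (Pmat α β n) (p1 y • A + q1 y • B) y := by
    intro y; rw [hfun]; exact ((hp1 y).smul_const A).add ((hq1 y).smul_const B)
  have hD1 : deriv (Pmat α β n) = fun y => p1 y • A + q1 y • B :=
    funext fun y => (hd1 y).deriv
  have hd2 : ∀ y, HasDerivAt (deriv (Pmat α β n)) (p2 y • A + q2 y • B) y := by
    intro y; rw [hD1]; exact ((hp2 y).smul_const A).add ((hq2 y).smul_const B)
  have hD2 : deriv (deriv (Pmat α β n)) x = p2 x • A + q2 x • B := (hd2 x).deriv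
  have h1 := hpode x
  have h2 := hqode x
  have hN : (-(x * (α + β + 2))) • (1 : Matrix (Fin 2) (Fin 2) ℝ) + (α - β) • Tmat
      = !![-(x * (α + β + 2)), α - β; α - β, -(x * (α + β + 2))] := by
    ext i j; fin_cases i <;> fin_cases j <;> simp [Tmat, Matrix.one_apply]
  rw [hD2, hD1, hfun, hN]
  ext i j
  fin_cases i <;> fin_cases j
  · simp [hA, hB, Matrix.mul_apply, Fin.sum_univ_two,
      Matrix.smul_apply, Matrix.add_apply]
    linear_combination h1 / 2 + h2 / 2
  · simp [hA, hB, Matrix.mul_apply, Fin.sum_univ_two,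
      Matrix.smul_apply, Matrix.add_apply]
    linear_combination -h1 / 2 + h2 / 2
  · simp [hA, hB, Matrix.mul_apply, Fin.sum_univ_two,
      Matrix.smul_apply, Matrix.add_apply]
    linear_combination -h1 / 2 + h2 / 2
  · simp [hA, hB, Matrix.mul_apply, Fin.sum_univ_two,
      Matrix.smul_apply, Matrix.add_apply]
    linear_combination h1 / 2 + h2 / 2
end
end

section
/- The operator D = (d²/dx²)(1-x²) + (d/dx)(-x(α+β+2)Id + (α-β)T), acting on the right on 2×2 matrix functions, admits the factorization (fD)(x) = ( (f'(x)(1-x²)W(x))' ) W(x)^{-1}, i.e., for every twice differentiable matrix function f and x ∈ (-1,1): (f'(x)(1-x²)W(x))' = (f''(x)(1-x²) + f'(x)(-x(α+β+2)Id + (α-β)T)) W(x). -/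
open Matrix Real Finset

noncomputable section

attribute [local instance] Matrix.normedAddCommGroup Matrix.normedSpace

/-- the factorization of the operator `D`: for every twice differentiable
matrix function `f` and `x ∈ (-1,1)`,
`(f'(x)(1-x²)W(x))' = (f''(x)(1-x²) + f'(x)(-x(α+β+2)Id + (α-β)T)) W(x)`. -/
theorem D_factorization (α β : ℝ) (hα : -1 < α) (hβ : -1 < β)
    (f : ℝ → Matrix (Fin 2) (Fin 2) ℝ) (hf : ContDiff ℝ 2 f)
    (x : ℝ) (hx : x ∈ Set.Ioo (-1 : ℝ) 1) :
    deriv (fun t => deriv f t * ((1 - t ^ 2) • Wmat α β t)) x =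
      ((1 - x ^ 2) • deriv (deriv f) x +
          deriv f x *
            ((-(x * (α + β + 2))) • (1 : Matrix (Fin 2) (Fin 2) ℝ) + (α - β) • Tmat)) *
        Wmat α β x := by
  obtain ⟨hx1, hx2⟩ := hx
  have ha : (0:ℝ) < 1 - x := by linarith
  have hb : (0:ℝ) < 1 + x := by linarith
  -- derivative of deriv f at x
  have hfd' : DifferentiableAt ℝ (deriv f) x := by
    have h2 : ContDiff ℝ (1 + 1) f := by
      rw [show ((1 : WithTop ℕ∞) + 1) = 2 by norm_num]; exact hf
    have := (contDiff_succ_iff_deriv.mp h2).2.2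
    exact (this.differentiable one_ne_zero) x
  set cU : ℝ := (β - α - (α + β + 2) * x) * jacobiW α β x with hcU
  set cV : ℝ := (α - β - (α + β + 2) * x) * jacobiW β α x with hcV
  have h1 : HasDerivAt (fun t : ℝ => 1 - t) (-1) x := by
    simpa using (hasDerivAt_id x).const_sub 1
  have h1' : HasDerivAt (fun t : ℝ => 1 + t) 1 x := by
    simpa using (hasDerivAt_id x).const_add 1
  have hU : HasDerivAt (fun t : ℝ => (1 - t) ^ (α + 1) * (1 + t) ^ (β + 1)) cU x := by
    have h2 := h1.rpow_const (p := α + 1) (Or.inl ha.ne')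
    have h3 := h1'.rpow_const (p := β + 1) (Or.inl hb.ne')
    have h4 := h2.fun_mul h3
    refine h4.congr_deriv ?_
    simp only [add_sub_cancel_right]
    rw [hcU, jacobiW, Real.rpow_add_one ha.ne', Real.rpow_add_one hb.ne']
    ring
  have hV : HasDerivAt (fun t : ℝ => (1 - t) ^ (β + 1) * (1 + t) ^ (α + 1)) cV x := by
    have h2 := h1.rpow_const (p := β + 1) (Or.inl ha.ne')
    have h3 := h1'.rpow_const (p := α + 1) (Or.inl hb.ne')
    have h4 := h2.fun_mul h3
    refine h4.congr_deriv ?_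
    simp only [add_sub_cancel_right]
    rw [hcV, jacobiW, Real.rpow_add_one ha.ne', Real.rpow_add_one hb.ne']
    ring
  have evU : (fun t : ℝ => (1 - t ^ 2) * jacobiW α β t) =ᶠ[nhds x]
      (fun t : ℝ => (1 - t) ^ (α + 1) * (1 + t) ^ (β + 1)) := by
    filter_upwards [Ioo_mem_nhds hx1 hx2] with t ht
    have h1t : (0:ℝ) < 1 - t := by linarith [ht.2]
    have h2t : (0:ℝ) < 1 + t := by linarith [ht.1]
    rw [jacobiW, Real.rpow_add_one h1t.ne', Real.rpow_add_one h2t.ne']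
    ring
  have evV : (fun t : ℝ => (1 - t ^ 2) * jacobiW β α t) =ᶠ[nhds x]
      (fun t : ℝ => (1 - t) ^ (β + 1) * (1 + t) ^ (α + 1)) := by
    filter_upwards [Ioo_mem_nhds hx1 hx2] with t ht
    have h1t : (0:ℝ) < 1 - t := by linarith [ht.2]
    have h2t : (0:ℝ) < 1 + t := by linarith [ht.1]
    rw [jacobiW, Real.rpow_add_one h1t.ne', Real.rpow_add_one h2t.ne']
    ring
  have hWa : HasDerivAt (fun t : ℝ => (1 - t ^ 2) * jacobiW α β t) cU x :=
    hU.congr_of_eventuallyEq evU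
  have hWb : HasDerivAt (fun t : ℝ => (1 - t ^ 2) * jacobiW β α t) cV x :=
    hV.congr_of_eventuallyEq evV
  -- matrix decomposition
  set Amat : Matrix (Fin 2) (Fin 2) ℝ := (1/2 : ℝ) • !![1, -1; -1, 1] with hAmat
  set Bmat : Matrix (Fin 2) (Fin 2) ℝ := (1/2 : ℝ) • !![1, 1; 1, 1] with hBmat
  have decomp : ∀ t : ℝ, (1 - t ^ 2) • Wmat α β t =
      ((1 - t ^ 2) * jacobiW α β t) • Amat + ((1 - t ^ 2) * jacobiW β α t) • Bmat := by
    intro t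
    ext i j
    fin_cases i <;> fin_cases j <;>
      simp [Wmat, hAmat, hBmat, Matrix.smul_apply, smul_eq_mul] <;> ring
  set G' : Matrix (Fin 2) (Fin 2) ℝ := cU • Amat + cV • Bmat with hGdef
  have hg : HasDerivAt (fun t : ℝ => (1 - t ^ 2) • Wmat α β t) G' x := by
    have h := (hWa.smul_const Amat).add (hWb.smul_const Bmat)
    exact h.congr_of_eventuallyEq (Filter.Eventually.of_forall decomp)
  -- entrywise hasDerivAt for derivatives of f
  have hf2 : ∀ i j : Fin 2, HasDerivAt (fun t => deriv f t i j) (deriv (deriv f) x i j) x := by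
    intro i j
    exact hasDerivAt_pi.1 (hasDerivAt_pi.1 hfd'.hasDerivAt i) j
  have hgij : ∀ i j : Fin 2,
      HasDerivAt (fun t => ((1 - t ^ 2) • Wmat α β t) i j) (G' i j) x := by
    intro i j
    exact hasDerivAt_pi.1 (hasDerivAt_pi.1 hg i) j
  -- product rule, entrywise
  have hprod : HasDerivAt (fun t => deriv f t * ((1 - t ^ 2) • Wmat α β t))
      (deriv (deriv f) x * ((1 - x ^ 2) • Wmat α β x) + deriv f x * G') x := by
    refine hasDerivAt_pi.2 fun i => hasDerivAt_pi.2 fun j => ?_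
    simp only [Matrix.mul_apply, Matrix.add_apply]
    rw [← Finset.sum_add_distrib]
    exact HasDerivAt.fun_sum fun k _ => (hf2 i k).fun_mul (hgij k j)
  refine hprod.deriv.trans ?_
  -- final matrix algebra
  have hG' : G' = ((-(x * (α + β + 2))) • (1 : Matrix (Fin 2) (Fin 2) ℝ) + (α - β) • Tmat) *
      Wmat α β x := by
    ext i j
    fin_cases i <;> fin_cases j <;>
      simp [hGdef, hcU, hcV, hAmat, hBmat, Wmat, Tmat, Matrix.mul_apply, Fin.sum_univ_two,
        Matrix.one_apply, Matrix.smul_apply, smul_eq_mul] <;> ring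
  rw [hG']
  simp only [add_mul, smul_mul_assoc, mul_add, mul_smul_comm, mul_assoc, one_mul]
end
end

section
/- With p(x)=(1-x²)W(x), the operator D̃ = (d/dx)((x-Ω)(d/dx)p(x))W(x)^{-1} + xA relates to D = (d²/dx²)(1-x²) + (d/dx)(-x(α+β+2)Id + (α-β)T) by D̃ = (x-Ω)D + (1-x²)(d/dx) + xA, i.e., for every twice differentiable matrix function f, (fD̃)(x) = (x-Ω)(fD)(x) + (1-x²)f'(x) + x f(x) A. -/
open Matrix Real Finset

noncomputable section

attribute [local instance] Matrix.normedAddCommGroup Matrix.normedSpace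

/-- Entrywise product rule for 2×2 matrix valued functions. -/
theorem HasDerivAt.matmul {f g : ℝ → Matrix (Fin 2) (Fin 2) ℝ} {f' g' : Matrix (Fin 2) (Fin 2) ℝ}
    {x : ℝ} (hf : HasDerivAt f f' x) (hg : HasDerivAt g g' x) :
    HasDerivAt (fun t => f t * g t) (f' * g x + f x * g') x := by
  apply hasDerivAt_pi.mpr; intro i; apply hasDerivAt_pi.mpr; intro j
  have hmm : ∀ t, (f t * g t) i j = ∑ k : Fin 2, f t i k * g t k j := fun t => Matrix.mul_apply
  simp only [hmm]
  have hval : (f' * g x + f x * g') i j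
      = ∑ k : Fin 2, (f' i k * g x k j + f x i k * g' k j) := by
    simp [Matrix.mul_apply, Finset.sum_add_distrib]
  rw [hval]
  exact HasDerivAt.fun_sum fun k _ =>
    ((hasDerivAt_pi.mp (hasDerivAt_pi.mp hf i) k).fun_mul (hasDerivAt_pi.mp (hasDerivAt_pi.mp hg k) j))

theorem jacobiW_deriv_key (α β x : ℝ) (hx : x ∈ Set.Ioo (-1:ℝ) 1) :
    HasDerivAt (fun t => (1 - t ^ 2) * jacobiW α β t)
      (jacobiW α β x * ((β - α) - (α + β + 2) * x)) x := by
  have ha : (0:ℝ) < 1 - x := by linarith [hx.2]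
  have hb : (0:ℝ) < 1 + x := by linarith [hx.1]
  have h1 : HasDerivAt (fun t : ℝ => (1 - t) ^ α) ((-1) * α * (1 - x) ^ (α - 1)) x :=
    ((hasDerivAt_id x).const_sub 1).rpow_const (Or.inl ha.ne')
  have h2 : HasDerivAt (fun t : ℝ => (1 + t) ^ β) (1 * β * (1 + x) ^ (β - 1)) x :=
    ((hasDerivAt_id x).const_add 1).rpow_const (Or.inl hb.ne')
  have hw : HasDerivAt (fun t => jacobiW α β t)
      ((-1) * α * (1 - x) ^ (α - 1) * (1 + x) ^ β + (1 - x) ^ α * (1 * β * (1 + x) ^ (β - 1))) x :=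
    h1.mul h2
  have hq : HasDerivAt (fun t : ℝ => 1 - t ^ 2) (-(2 * x)) x := by
    simpa using ((hasDerivAt_pow 2 x).const_sub 1)
  refine (hq.fun_mul hw).congr_deriv ?_
  have e1 : (1 - x) ^ (α - 1) = (1 - x) ^ α / (1 - x) := by
    rw [Real.rpow_sub ha, Real.rpow_one]
  have e2 : (1 + x) ^ (β - 1) = (1 + x) ^ β / (1 + x) := by
    rw [Real.rpow_sub hb, Real.rpow_one]
  rw [e1, e2]
  simp only [jacobiW]
  field_simp
  ring

theorem p_hasDerivAt (α β x : ℝ) (hx : x ∈ Set.Ioo (-1:ℝ) 1) :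
    HasDerivAt (fun t => (1 - t ^ 2) • Wmat α β t)
      (Wmat α β x * ((-(x * (α + β + 2))) • (1 : Matrix (Fin 2) (Fin 2) ℝ) + (α - β) • Tmat)) x := by
  have hA := jacobiW_deriv_key α β x hx
  have hB := jacobiW_deriv_key β α x hx
  apply hasDerivAt_pi.mpr; intro i; apply hasDerivAt_pi.mpr; intro j
  fin_cases i <;> fin_cases j <;>
      simp [Wmat, Tmat, Matrix.mul_apply, Matrix.smul_apply, Matrix.one_apply,
        Fin.sum_univ_two, Fin.mk_zero, Fin.mk_one]
  · convert ((hA.fun_add hB).const_mul (1/2 : ℝ)) using 1 <;> first | (ext t; ring) | ring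
  · convert ((hB.fun_sub hA).const_mul (1/2 : ℝ)) using 1 <;> first | (ext t; ring) | ring
  · convert ((hB.fun_sub hA).const_mul (1/2 : ℝ)) using 1 <;> first | (ext t; ring) | ring
  · convert ((hA.fun_add hB).const_mul (1/2 : ℝ)) using 1 <;> first | (ext t; ring) | ring

theorem jacobiW_pos (α β x : ℝ) (hx : x ∈ Set.Ioo (-1:ℝ) 1) : 0 < jacobiW α β x :=
  mul_pos (Real.rpow_pos_of_pos (by linarith [hx.2]) _)
    (Real.rpow_pos_of_pos (by linarith [hx.1]) _)

theorem Wmat_det (α β x : ℝ) : (Wmat α β x).det = jacobiW α β x * jacobiW β α x := by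
  simp [Wmat, Matrix.det_fin_two]; ring

theorem Wmat_mul_inv (α β x : ℝ) (hx : x ∈ Set.Ioo (-1:ℝ) 1) :
    Wmat α β x * (Wmat α β x)⁻¹ = 1 := by
  apply Matrix.mul_nonsing_inv
  rw [Wmat_det]
  exact (mul_pos (jacobiW_pos α β x hx) (jacobiW_pos β α x hx)).ne'.isUnit

theorem Wmat_comm (α β x : ℝ) :
    Wmat α β x * ((-(x * (α + β + 2))) • (1 : Matrix (Fin 2) (Fin 2) ℝ) + (α - β) • Tmat)
    = ((-(x * (α + β + 2))) • (1 : Matrix (Fin 2) (Fin 2) ℝ) + (α - β) • Tmat) * Wmat α β x := by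
  ext i j
  fin_cases i <;> fin_cases j <;>
    simp [Wmat, Tmat, Matrix.mul_apply, Matrix.one_apply, Fin.sum_univ_two,
      Fin.mk_zero, Fin.mk_one] <;> ring

/-- The differential operator `D̃` acting on the right on 2×2 matrix valued functions:
`(fD̃)(x) = ((x-Ω) f'(x) p(x))' W(x)⁻¹ + x N(N+α+β+2) f(x)`, where `p(x) = (1-x²)W(x)`. -/
def Dtilde (α β Ω : ℝ) (N : ℕ) (f : ℝ → Matrix (Fin 2) (Fin 2) ℝ) (x : ℝ) :
    Matrix (Fin 2) (Fin 2) ℝ :=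
  deriv (fun t => (t - Ω) • (deriv f t * ((1 - t ^ 2) • Wmat α β t))) x * (Wmat α β x)⁻¹ +
    (x * (N * (N + α + β + 2))) • f x

/-- `D̃ = (x-Ω) D + (1-x²) d/dx + x A`, where
`(fD)(x) = f''(x)(1-x²) + f'(x)(-x(α+β+2)Id + (α-β)T)` and `A = N(N+α+β+2)Id`. -/
theorem Dtilde_eq_shifted_D (α β : ℝ) (hα : -1 < α) (hβ : -1 < β)
    (Ω : ℝ) (N : ℕ) (f : ℝ → Matrix (Fin 2) (Fin 2) ℝ) (hf : ContDiff ℝ 2 f)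
    (x : ℝ) (hx : x ∈ Set.Ioo (-1 : ℝ) 1) :
    Dtilde α β Ω N f x =
      (x - Ω) •
          ((1 - x ^ 2) • deriv (deriv f) x +
            deriv f x *
              ((-(x * (α + β + 2))) • (1 : Matrix (Fin 2) (Fin 2) ℝ) + (α - β) • Tmat)) +
        (1 - x ^ 2) • deriv f x + (x * (N * (N + α + β + 2))) • f x := by
  set M : Matrix (Fin 2) (Fin 2) ℝ :=
    (-(x * (α + β + 2))) • (1 : Matrix (Fin 2) (Fin 2) ℝ) + (α - β) • Tmat with hM
  have hf1 : ContDiff ℝ 1 (deriv f) := by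
    have h2 : ContDiff ℝ ((1:ℕ∞) + 1) f := by exact_mod_cast hf
    exact (contDiff_succ_iff_deriv.mp h2).2.2
  have hdf : HasDerivAt (deriv f) (deriv (deriv f) x) x :=
    ((hf1.differentiable one_ne_zero).differentiableAt (x := x)).hasDerivAt
  have hP := p_hasDerivAt α β x hx
  have hprod : HasDerivAt (fun t => deriv f t * ((1 - t ^ 2) • Wmat α β t))
      (deriv (deriv f) x * ((1 - x ^ 2) • Wmat α β x) + deriv f x * (Wmat α β x * M)) x :=
    hdf.matmul hP
  have hlin : HasDerivAt (fun t : ℝ => t - Ω) 1 x := (hasDerivAt_id x).sub_const Ω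
  have hg : HasDerivAt (fun t => (t - Ω) • (deriv f t * ((1 - t ^ 2) • Wmat α β t)))
      ((x - Ω) • (deriv (deriv f) x * ((1 - x ^ 2) • Wmat α β x) + deriv f x * (Wmat α β x * M)) +
        (1:ℝ) • (deriv f x * ((1 - x ^ 2) • Wmat α β x))) x :=
    hlin.smul hprod
  have hWI := Wmat_mul_inv α β x hx
  have e1 : deriv f x * ((1 - x ^ 2) • Wmat α β x) * (Wmat α β x)⁻¹
      = (1 - x ^ 2) • deriv f x := by
    simp only [mul_smul_comm, smul_mul_assoc, mul_assoc, hWI, mul_one]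
  have e2 : deriv (deriv f) x * ((1 - x ^ 2) • Wmat α β x) * (Wmat α β x)⁻¹
      = (1 - x ^ 2) • deriv (deriv f) x := by
    simp only [mul_smul_comm, smul_mul_assoc, mul_assoc, hWI, mul_one]
  have e3 : deriv f x * (Wmat α β x * M) * (Wmat α β x)⁻¹ = deriv f x * M := by
    rw [Wmat_comm α β x]
    simp only [mul_assoc, hWI, mul_one]
    rw [hM]
  rw [Dtilde]
  erw [hg.deriv]
  rw [add_mul, smul_mul_assoc, one_smul, add_mul, e1, e2, e3]
end
end
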